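/- Let f_0, …, f_d be tropical polynomials in n variables with integer coefficients and f = ⊕_{i=0}^d f_i ⊗ y^{⊗i}. If f admits at least one resolution, then f admits a minimal resolution: a resolution y* such that every resolution y of f satisfies y*(x) ≤ y(x) for all x ∈ ℝ^n. -/

import Mathlib

open Finset

/-- A tropical polynomial in `n` variables: a finite nonempty family of monomials
`(c, J)` with real coefficient `c` and exponent `J ∈ ℕ^n`.  It defines the convex
piecewise-linear function `x ↦ min_J (c_J + ⟨J, x⟩)`. -/
structure TropPoly (n : ℕ) where
  monos : Finset (ℝ × (Fin n → ℕ))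
  ne : monos.Nonempty

/-- The convex piecewise-linear function defined by a tropical polynomial. -/
noncomputable def TropPoly.eval {n : ℕ} (f : TropPoly n) (x : Fin n → ℝ) : ℝ :=
  f.monos.inf' f.ne fun p => p.1 + ∑ j, (p.2 j : ℝ) * x j

/-- A tropical Newton–Puiseux polynomial in `n` variables: a finite nonempty family of
monomials `(a, I)` with rational coefficient `a` and exponent `I ∈ ℚ^n`. -/
structure NPPoly (n : ℕ) where
  monos : Finset (ℚ × (Fin n → ℚ))
  ne : monos.Nonempty

/-- The convex piecewise-linear function defined by a tropical Newton–Puiseux polynomial. -/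
noncomputable def NPPoly.eval {n : ℕ} (y : NPPoly n) (x : Fin n → ℝ) : ℝ :=
  y.monos.inf' y.ne fun p => (p.1 : ℝ) + ∑ j, (p.2 j : ℝ) * x j

/-- The value of the term `f_i ⊗ y^{⊗ i}` of `f = ⊕_{i=0}^d f_i ⊗ y^{⊗ i}` at the point `x`,
when the indeterminate `y` has the value `y0`. -/
noncomputable def termVal {n d : ℕ} (f : Fin (d+1) → TropPoly n) (x : Fin n → ℝ) (y0 : ℝ)
    (i : Fin (d+1)) : ℝ :=
  (f i).eval x + (i : ℕ) * y0

/-- At the point `x`, with value `y0` substituted for the indeterminate, the minimum of the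
`d+1` values `f_i(x) + i·y0` is attained for at least two distinct indices `i`. -/
def TiesAt {n d : ℕ} (f : Fin (d+1) → TropPoly n) (x : Fin n → ℝ) (y0 : ℝ) : Prop :=
  ∃ i₁ i₂ : Fin (d+1), i₁ ≠ i₂ ∧ termVal f x y0 i₁ = termVal f x y0 i₂ ∧
    ∀ i, termVal f x y0 i₁ ≤ termVal f x y0 i

/-- A function `y : ℝ^n → ℝ` is a resolution of `f = ⊕_{i=0}^d f_i ⊗ y^{⊗ i}` if at every
point `x` the minimum of the `d+1` values `f_i(x) + i·y(x)` is attained for at least two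
distinct indices. -/
def IsResolution {n d : ℕ} (f : Fin (d+1) → TropPoly n) (y : (Fin n → ℝ) → ℝ) : Prop :=
  ∀ x, TiesAt f x (y x)

/-- A tropical polynomial has integer coefficients. -/
def HasIntCoeffs {n : ℕ} (f : TropPoly n) : Prop :=
  ∀ p ∈ f.monos, ∃ z : ℤ, p.1 = (z : ℝ)

section AuxiliaryDefs

open Set

variable {n d : ℕ}

/-- Evaluation of a rational affine "monomial" `(a, I)` at `x`. -/
noncomputable def wEval {n : ℕ} (w : ℚ × (Fin n → ℚ)) (x : Fin n → ℝ) : ℝ :=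
  (w.1 : ℝ) + ∑ j, (w.2 j : ℝ) * x j

lemma continuous_wEval (w : ℚ × (Fin n → ℚ)) : Continuous (wEval w) := by
  unfold wEval
  exact continuous_const.add <| continuous_finset_sum _ fun j _ =>
    continuous_const.mul (continuous_apply j)

lemma wEval_combo (w : ℚ × (Fin n → ℚ)) {x₁ x₂ : Fin n → ℝ} {a b : ℝ} (hab : a + b = 1) :
    wEval w (a • x₁ + b • x₂) = a * wEval w x₁ + b * wEval w x₂ := by
  unfold wEval
  have hs : ∑ j, (w.2 j : ℝ) * ((a • x₁ + b • x₂) j)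
      = a * ∑ j, (w.2 j : ℝ) * x₁ j + b * ∑ j, (w.2 j : ℝ) * x₂ j := by
    rw [Finset.mul_sum, Finset.mul_sum, ← Finset.sum_add_distrib]
    refine Finset.sum_congr rfl fun j _ => ?_
    simp only [Pi.add_apply, Pi.smul_apply, smul_eq_mul]
    ring
  rw [hs]
  linear_combination (-(w.1 : ℝ)) * hab

open Classical in
/-- A real number which is an integer, recovered as a rational. -/
noncomputable def ratOf (c : ℝ) : ℚ :=
  if h : ∃ q : ℚ, c = (q : ℝ) then h.choose else 0

lemma ratOf_cast {c : ℝ} (h : ∃ z : ℤ, c = (z : ℝ)) : (ratOf c : ℝ) = c := by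
  obtain ⟨zz, hzz⟩ := h
  have h' : ∃ q : ℚ, c = (q : ℝ) := ⟨(zz : ℚ), by rw [hzz]; push_cast; ring⟩
  rw [ratOf, dif_pos h', ← h'.choose_spec]

/-- The finite family of rational affine functions among which every resolution value lies. -/
noncomputable def bigW (f : Fin (d+1) → TropPoly n) : Finset (ℚ × (Fin n → ℚ)) :=
  Finset.univ.biUnion fun i : Fin (d+1) => Finset.univ.biUnion fun j : Fin (d+1) =>
    ((f i).monos ×ˢ (f j).monos).image fun pq =>
      ((ratOf pq.1.1 - ratOf pq.2.1) / (((j : ℕ) : ℚ) - ((i : ℕ) : ℚ)),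
       fun k => (((pq.1.2 k : ℕ) : ℚ) - ((pq.2.2 k : ℕ) : ℚ)) / (((j : ℕ) : ℚ) - ((i : ℕ) : ℚ)))

lemma ties_exists_w {f : Fin (d+1) → TropPoly n} (hint : ∀ i, HasIntCoeffs (f i))
    {x : Fin n → ℝ} {t : ℝ} (ht : TiesAt f x t) :
    ∃ w ∈ bigW f, t = wEval w x := by
  obtain ⟨i₁, i₂, hne, heq, -⟩ := ht
  obtain ⟨p₁, hp₁, hv₁⟩ := Finset.exists_mem_eq_inf' (f i₁).ne
    (fun p => p.1 + ∑ j, (p.2 j : ℝ) * x j)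
  obtain ⟨p₂, hp₂, hv₂⟩ := Finset.exists_mem_eq_inf' (f i₂).ne
    (fun p => p.1 + ∑ j, (p.2 j : ℝ) * x j)
  set w : ℚ × (Fin n → ℚ) :=
      ((ratOf p₁.1 - ratOf p₂.1) / (((i₂ : ℕ) : ℚ) - ((i₁ : ℕ) : ℚ)),
       fun k => (((p₁.2 k : ℕ) : ℚ) - ((p₂.2 k : ℕ) : ℚ)) / (((i₂ : ℕ) : ℚ) - ((i₁ : ℕ) : ℚ)))
    with hwdef
  have hwmem : w ∈ bigW f :=
    Finset.mem_biUnion.2 ⟨i₁, Finset.mem_univ _, Finset.mem_biUnion.2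
      ⟨i₂, Finset.mem_univ _, Finset.mem_image.2
        ⟨(p₁, p₂), Finset.mem_product.2 ⟨hp₁, hp₂⟩, rfl⟩⟩⟩
  refine ⟨w, hwmem, ?_⟩
  have hvne : (i₁ : ℕ) ≠ (i₂ : ℕ) := fun h => hne (Fin.ext h)
  set D : ℝ := ((i₂ : ℕ) : ℝ) - ((i₁ : ℕ) : ℝ) with hD
  have hd : D ≠ 0 := by
    rw [hD, sub_ne_zero]
    intro h
    exact hvne (Nat.cast_injective h).symm
  have hq₁ : ((ratOf p₁.1 : ℚ) : ℝ) = p₁.1 := ratOf_cast (hint i₁ p₁ hp₁)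
  have hq₂ : ((ratOf p₂.1 : ℚ) : ℝ) = p₂.1 := ratOf_cast (hint i₂ p₂ hp₂)
  have hw1 : ((w.1 : ℚ) : ℝ) = (p₁.1 - p₂.1) / D := by
    rw [hwdef]
    push_cast
    rw [hq₁, hq₂, hD]
  have hw2 : ∀ k, ((w.2 k : ℚ) : ℝ) = (((p₁.2 k : ℕ) : ℝ) - ((p₂.2 k : ℕ) : ℝ)) / D := by
    intro k
    rw [hwdef]
    push_cast
    rw [hD]
  set S₁ : ℝ := ∑ k, ((p₁.2 k : ℕ) : ℝ) * x k with hS₁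
  set S₂ : ℝ := ∑ k, ((p₂.2 k : ℕ) : ℝ) * x k with hS₂
  have key : wEval w x * D = (p₁.1 + S₁) - (p₂.1 + S₂) := by
    unfold wEval
    rw [add_mul, Finset.sum_mul]
    have h1 : ((w.1 : ℚ) : ℝ) * D = p₁.1 - p₂.1 := by rw [hw1, div_mul_cancel₀ _ hd]
    have h2 : ∀ k ∈ Finset.univ, ((w.2 k : ℚ) : ℝ) * x k * D
        = ((p₁.2 k : ℕ) : ℝ) * x k - ((p₂.2 k : ℕ) : ℝ) * x k := by
      intro k _
      rw [hw2 k]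
      field_simp
    rw [Finset.sum_congr rfl h2, h1, Finset.sum_sub_distrib, hS₁, hS₂]
    ring
  have ht' : t * D = (p₁.1 + S₁) - (p₂.1 + S₂) := by
    have e₁ : (f i₁).eval x = p₁.1 + S₁ := hv₁
    have e₂ : (f i₂).eval x = p₂.1 + S₂ := hv₂
    simp only [termVal] at heq
    rw [e₁, e₂] at heq
    rw [hD]
    ring_nf
    ring_nf at heq
    linarith [heq]
  exact mul_right_cancel₀ hd (ht'.trans key.symm)

lemma NPPoly.eval_concave_combo (y : NPPoly n) {x₁ x₂ : Fin n → ℝ} {a b : ℝ}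
    (ha : 0 ≤ a) (hb : 0 ≤ b) (hab : a + b = 1) :
    a * y.eval x₁ + b * y.eval x₂ ≤ y.eval (a • x₁ + b • x₂) := by
  obtain ⟨p, hp, hv⟩ := Finset.exists_mem_eq_inf' y.ne
    (fun p => (p.1 : ℝ) + ∑ j, (p.2 j : ℝ) * (a • x₁ + b • x₂) j)
  have h1 : y.eval x₁ ≤ (p.1 : ℝ) + ∑ j, (p.2 j : ℝ) * x₁ j := Finset.inf'_le _ hp
  have h2 : y.eval x₂ ≤ (p.1 : ℝ) + ∑ j, (p.2 j : ℝ) * x₂ j := Finset.inf'_le _ hp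
  have hv' : y.eval (a • x₁ + b • x₂)
      = (p.1 : ℝ) + ∑ j, (p.2 j : ℝ) * ((a • x₁ + b • x₂) j) := hv
  have hs : ∑ j, (p.2 j : ℝ) * ((a • x₁ + b • x₂) j)
      = a * ∑ j, (p.2 j : ℝ) * x₁ j + b * ∑ j, (p.2 j : ℝ) * x₂ j := by
    rw [Finset.mul_sum, Finset.mul_sum, ← Finset.sum_add_distrib]
    refine Finset.sum_congr rfl fun j _ => ?_
    simp only [Pi.add_apply, Pi.smul_apply, smul_eq_mul]
    ring
  calc a * y.eval x₁ + b * y.eval x₂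
      ≤ a * ((p.1 : ℝ) + ∑ j, (p.2 j : ℝ) * x₁ j)
        + b * ((p.1 : ℝ) + ∑ j, (p.2 j : ℝ) * x₂ j) := by gcongr
    _ = y.eval (a • x₁ + b • x₂) := by
        rw [hv', hs]
        linear_combination (p.1 : ℝ) * hab

lemma support_from_open {z : (Fin n → ℝ) → ℝ} (hconc : ConcaveOn ℝ Set.univ z)
    (w : ℚ × (Fin n → ℚ)) {V : Set (Fin n → ℝ)} (hV : IsOpen V) {v : Fin n → ℝ} (hv : v ∈ V)
    (heq : ∀ u ∈ V, z u = wEval w u) : ∀ x, z x ≤ wEval w x := by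
  intro x
  have hcont : ContinuousAt (fun t : ℝ => v + t • (v - x)) 0 := by
    fun_prop
  have hmem : ∀ᶠ t in nhds (0 : ℝ), v + t • (v - x) ∈ V := by
    apply hcont
    simpa using hV.mem_nhds hv
  obtain ⟨t, ht0, hpV, -⟩ := (hmem.and (eventually_lt_nhds zero_lt_one)).exists_gt
  set p : Fin n → ℝ := v + t • (v - x) with hp
  have h1t : (0 : ℝ) < 1 + t := by linarith
  set a : ℝ := 1 / (1 + t) with haa
  set b : ℝ := t / (1 + t) with hbb
  have hab : a + b = 1 := by
    rw [haa, hbb]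
    field_simp
  have hva : v = a • p + b • x := by
    funext j
    simp only [hp, haa, hbb, Pi.add_apply, Pi.smul_apply, Pi.sub_apply, smul_eq_mul]
    field_simp
    ring
  have hc := hconc.2 (Set.mem_univ p) (Set.mem_univ x) (by positivity)
    (by rw [hbb]; positivity) hab
  rw [← hva] at hc
  have hzv : z v = wEval w v := heq v hv
  have hzp : z p = wEval w p := heq p hpV
  have hwv : wEval w v = a * wEval w p + b * wEval w x := by
    rw [hva]; exact wEval_combo w hab
  simp only [smul_eq_mul, hzp, hzv, hwv] at hc
  have hb0 : 0 < b := by rw [hbb]; positivity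
  nlinarith [hc]

lemma exists_open_agree {z : (Fin n → ℝ) → ℝ} (hz : Continuous z)
    {U : Set (Fin n → ℝ)} (hU : IsOpen U) (hne : U.Nonempty)
    (W'' : Finset (ℚ × (Fin n → ℚ)))
    (hcov : ∀ x ∈ U, ∃ w ∈ W'', z x = wEval w x) :
    ∃ w ∈ W'', ∃ V : Set (Fin n → ℝ), IsOpen V ∧ V.Nonempty ∧ ∀ u ∈ V, z u = wEval w u := by
  haveI : Nonempty U := hne.to_subtype
  haveI : LocallyCompactSpace U := hU.locallyCompactSpace
  set F : {w // w ∈ W''} → Set U := fun w => {u : U | z u.1 = wEval w.1 u.1} with hF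
  have hc : ∀ w, IsClosed (F w) := fun w =>
    isClosed_eq (hz.comp continuous_subtype_val)
      ((continuous_wEval w.1).comp continuous_subtype_val)
  have hun : ⋃ w, F w = Set.univ := by
    ext u
    simp only [Set.mem_iUnion, Set.mem_univ, iff_true, hF, Set.mem_setOf_eq]
    obtain ⟨w, hw, h⟩ := hcov u.1 u.2
    exact ⟨⟨w, hw⟩, h⟩
  obtain ⟨w, hw⟩ := nonempty_interior_of_iUnion_of_closed hc hun
  obtain ⟨u, hu⟩ := hw
  refine ⟨w.1, w.2, Subtype.val '' interior (F w), ?_,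
    ⟨u.1, Set.mem_image_of_mem _ hu⟩, ?_⟩
  · exact hU.isOpenEmbedding_subtypeVal.isOpenMap _ isOpen_interior
  · rintro _ ⟨u', hu', rfl⟩
    have h' : u' ∈ F w := interior_subset hu'
    simpa [hF] using h'

end AuxiliaryDefs

/-- If `f_0, ..., f_d` have integer coefficients and `f` admits at least one resolution,
then it admits a minimal resolution. -/
theorem exists_minimal_resolution {n d : ℕ} (f : Fin (d+1) → TropPoly n)
    (hint : ∀ i, HasIntCoeffs (f i))
    (hex : ∃ y : NPPoly n, IsResolution f y.eval) :
    ∃ ystar : NPPoly n, IsResolution f ystar.eval ∧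
      ∀ y : NPPoly n, IsResolution f y.eval → ∀ x, ystar.eval x ≤ y.eval x := by
  classical
  obtain ⟨y₀, hy₀⟩ := hex
  set W : Finset (ℚ × (Fin n → ℚ)) := bigW f with hWdef
  set RV : (Fin n → ℝ) → Set ℝ :=
    fun x => {t | ∃ y : NPPoly n, IsResolution f y.eval ∧ y.eval x = t} with hRVdef
  have hRVne : ∀ x, (RV x).Nonempty := fun x => ⟨y₀.eval x, y₀, hy₀, rfl⟩
  have hRVfin : ∀ x, (RV x).Finite := by
    intro x
    apply Set.Finite.subset (Finset.finite_toSet (W.image (fun w => wEval w x)))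
    rintro t ⟨y, hy, rfl⟩
    obtain ⟨w, hw, hwt⟩ := ties_exists_w hint (hy x)
    exact Finset.mem_coe.2 (Finset.mem_image.2 ⟨w, hw, hwt.symm⟩)
  set z : (Fin n → ℝ) → ℝ := fun x => sInf (RV x) with hzdef
  have hzmem : ∀ x, ∃ y : NPPoly n, IsResolution f y.eval ∧ y.eval x = z x :=
    fun x => Set.Nonempty.csInf_mem (hRVne x) (hRVfin x)
  have hzle : ∀ (y : NPPoly n), IsResolution f y.eval → ∀ x, z x ≤ y.eval x :=
    fun y hy x => csInf_le ((hRVfin x).bddBelow) ⟨y, hy, rfl⟩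
  have hzres : IsResolution f z := by
    intro x
    obtain ⟨y, hy, he⟩ := hzmem x
    rw [← he]
    exact hy x
  have hzsel : ∀ x, ∃ w ∈ W, z x = wEval w x := fun x => ties_exists_w hint (hzres x)
  have hzconc : ConcaveOn ℝ Set.univ z := by
    refine ⟨convex_univ, ?_⟩
    intro x₁ _ x₂ _ a b ha hb hab
    obtain ⟨y, hy, he⟩ := hzmem (a • x₁ + b • x₂)
    calc a • z x₁ + b • z x₂ ≤ a * y.eval x₁ + b * y.eval x₂ := by
          simp only [smul_eq_mul]
          gcongr
          exacts [hzle y hy x₁, hzle y hy x₂]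
      _ ≤ y.eval (a • x₁ + b • x₂) := y.eval_concave_combo ha hb hab
      _ = z (a • x₁ + b • x₂) := he
  have hzcont : Continuous z := by
    rw [← continuousOn_univ]
    exact hzconc.continuousOn isOpen_univ
  set W' : Finset (ℚ × (Fin n → ℚ)) := W.filter (fun w => ∀ x, z x ≤ wEval w x) with hW'def
  have hW'le : ∀ w ∈ W', ∀ x, z x ≤ wEval w x := fun w hw => (Finset.mem_filter.1 hw).2
  have hkey : ∀ x, ∃ w ∈ W', z x = wEval w x := by
    intro x₀
    by_contra hcon
    push_neg at hcon
    set U : Set (Fin n → ℝ) := ⋂ w ∈ W', {x | z x < wEval w x} with hUdef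
    have hmemU : ∀ {x}, x ∈ U ↔ ∀ w ∈ W', z x < wEval w x := by
      intro x
      simp only [hUdef, Set.mem_iInter, Set.mem_setOf_eq]
    have hUopen : IsOpen U :=
      isOpen_biInter_finset fun w _ => isOpen_lt hzcont (continuous_wEval w)
    have hx₀ : x₀ ∈ U :=
      hmemU.2 fun w hw => lt_of_le_of_ne (hW'le w hw x₀) (hcon w hw)
    have hcov : ∀ x ∈ U, ∃ w ∈ W \ W', z x = wEval w x := by
      intro x hx
      obtain ⟨w, hw, hwe⟩ := hzsel x
      refine ⟨w, Finset.mem_sdiff.2 ⟨hw, fun hw' => ?_⟩, hwe⟩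
      exact absurd hwe (ne_of_lt (hmemU.1 hx w hw'))
    obtain ⟨w, hw, V, hVopen, hVne, hVeq⟩ :=
      exists_open_agree hzcont hUopen ⟨x₀, hx₀⟩ _ hcov
    obtain ⟨v, hv⟩ := hVne
    have hsup : ∀ x, z x ≤ wEval w x := support_from_open hzconc w hVopen hv hVeq
    exact (Finset.mem_sdiff.1 hw).2
      (Finset.mem_filter.2 ⟨(Finset.mem_sdiff.1 hw).1, hsup⟩)
  obtain ⟨w₀, hw₀, -⟩ := hkey 0
  have hne' : W'.Nonempty := ⟨w₀, hw₀⟩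
  set ystar : NPPoly n := ⟨W', hne'⟩ with hystar
  have heval : ∀ x, ystar.eval x = z x := by
    intro x
    apply le_antisymm
    · obtain ⟨w, hw, hwe⟩ := hkey x
      rw [hwe]
      exact Finset.inf'_le _ hw
    · exact Finset.le_inf' _ _ fun w hw => hW'le w hw x
  refine ⟨ystar, ?_, ?_⟩
  · intro x
    rw [heval x]
    exact hzres x
  · intro y hy x
    rw [heval x]
    exact hzle y hy x
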